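/- Let p ∈ [1/5, 1/2] and define f : [0,1] → [0,1] by f(x) = x(1 + (4/p²)(1−x)(p−x)) for x ∈ [0,p) and f(x) = x(1 − (4/(1−p)²)(1−x)(x−p)) for x ∈ [p,1]. Then f is strictly increasing on [0, p/2], strictly decreasing on [p/2, (p+1)/2], and strictly increasing on [(p+1)/2, 1]. -/

import Mathlib

theorem stmt_9 (p : ℝ) (hp : p ∈ Set.Icc (1/5 : ℝ) (1/2))
    (f : ℝ → ℝ)
    (hf : ∀ x, f x = if x < p then x * (1 + (4 / p^2) * (1 - x) * (p - x))
      else x * (1 - (4 / (1-p)^2) * (1 - x) * (x - p))) :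
    StrictMonoOn f (Set.Icc 0 (p/2)) ∧
    StrictAntiOn f (Set.Icc (p/2) ((p+1)/2)) ∧
    StrictMonoOn f (Set.Icc ((p+1)/2) 1) := by
  obtain ⟨hp1, hp2⟩ := hp
  have hp0 : (0:ℝ) < p := by linarith
  have hp0' : p ≠ 0 := ne_of_gt hp0
  have hq0 : (0:ℝ) < 1 - p := by linarith
  have hq0' : (1:ℝ) - p ≠ 0 := ne_of_gt hq0
  set g1 : ℝ → ℝ := fun x => x * (1 + (4 / p^2) * (1 - x) * (p - x)) with hg1
  set g2 : ℝ → ℝ := fun x => x * (1 - (4 / (1-p)^2) * (1 - x) * (x - p)) with hg2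
  -- derivatives
  have hd1 : ∀ x : ℝ, HasDerivAt g1 ((12/p^2) * (x - p/2) * (x - (p+4)/6)) x := by
    intro x
    have h0 : HasDerivAt (fun y:ℝ => 1 - y) (-1) x := by
      simpa using (hasDerivAt_id x).const_sub 1
    have h1 : HasDerivAt (fun y:ℝ => p - y) (-1) x := by
      simpa using (hasDerivAt_id x).const_sub p
    have h2 : HasDerivAt (fun y:ℝ => (4 / p^2) * (1 - y) * (p - y))
        ((4/p^2) * (-1) * (p - x) + (4/p^2) * (1 - x) * (-1)) x :=
      (h0.const_mul (4/p^2)).mul h1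
    have h3 : HasDerivAt (fun y:ℝ => 1 + (4 / p^2) * (1 - y) * (p - y))
        ((4/p^2) * (-1) * (p - x) + (4/p^2) * (1 - x) * (-1)) x := h2.const_add 1
    have h4 := (hasDerivAt_id' x).mul h3
    refine h4.congr_deriv ?_
    field_simp
    ring
  have hd2 : ∀ x : ℝ, HasDerivAt g2 ((12/(1-p)^2) * (x - (p+1)/2) * (x - (p+1)/6)) x := by
    intro x
    have h0 : HasDerivAt (fun y:ℝ => 1 - y) (-1) x := by
      simpa using (hasDerivAt_id x).const_sub 1
    have h1 : HasDerivAt (fun y:ℝ => y - p) (1) x := (hasDerivAt_id x).sub_const p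
    have h2 : HasDerivAt (fun y:ℝ => (4 / (1-p)^2) * (1 - y) * (y - p))
        ((4/(1-p)^2) * (-1) * (x - p) + (4/(1-p)^2) * (1 - x) * 1) x :=
      (h0.const_mul (4/(1-p)^2)).mul h1
    have h3 : HasDerivAt (fun y:ℝ => 1 - (4 / (1-p)^2) * (1 - y) * (y - p))
        (-((4/(1-p)^2) * (-1) * (x - p) + (4/(1-p)^2) * (1 - x) * 1)) x := h2.const_sub 1
    have h4 := (hasDerivAt_id' x).mul h3
    refine h4.congr_deriv ?_
    field_simp
    ring
  have hc1 : (0:ℝ) < 12/p^2 := by positivity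
  have hc2 : (0:ℝ) < 12/(1-p)^2 := by positivity
  have hcont1 : ContinuousOn g1 Set.univ := fun x _ => ((hd1 x).continuousAt).continuousWithinAt
  have hcont2 : ContinuousOn g2 Set.univ := fun x _ => ((hd2 x).continuousAt).continuousWithinAt
  -- monotonicity of the two branches
  have m1 : StrictMonoOn g1 (Set.Icc 0 (p/2)) := by
    apply strictMonoOn_of_deriv_pos (convex_Icc _ _) (hcont1.mono (Set.subset_univ _))
    intro x hx
    rw [interior_Icc] at hx
    rw [(hd1 x).deriv, mul_assoc]
    exact mul_pos hc1 (mul_pos_of_neg_of_neg (by linarith [hx.2]) (by linarith [hx.2]))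
  have a1 : StrictAntiOn g1 (Set.Icc (p/2) p) := by
    apply strictAntiOn_of_deriv_neg (convex_Icc _ _) (hcont1.mono (Set.subset_univ _))
    intro x hx
    rw [interior_Icc] at hx
    rw [(hd1 x).deriv, mul_assoc]
    exact mul_neg_of_pos_of_neg hc1
      (mul_neg_of_pos_of_neg (by linarith [hx.1]) (by linarith [hx.2]))
  have a2 : StrictAntiOn g2 (Set.Icc p ((p+1)/2)) := by
    apply strictAntiOn_of_deriv_neg (convex_Icc _ _) (hcont2.mono (Set.subset_univ _))
    intro x hx
    rw [interior_Icc] at hx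
    rw [(hd2 x).deriv, mul_assoc]
    exact mul_neg_of_pos_of_neg hc2 (by
      have h1 : x - (p+1)/2 < 0 := by linarith [hx.2]
      have h2 : 0 < x - (p+1)/6 := by linarith [hx.1]
      nlinarith)
  have m2 : StrictMonoOn g2 (Set.Icc ((p+1)/2) 1) := by
    apply strictMonoOn_of_deriv_pos (convex_Icc _ _) (hcont2.mono (Set.subset_univ _))
    intro x hx
    rw [interior_Icc] at hx
    rw [(hd2 x).deriv, mul_assoc]
    exact mul_pos hc2 (mul_pos (by linarith [hx.1]) (by linarith [hx.1]))
  -- f agrees with g1 on [0,p] and with g2 on [p,1]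
  have he1 : ∀ x ∈ Set.Icc (0:ℝ) p, f x = g1 x := by
    intro x hx
    rw [hf]
    split_ifs with h
    · rfl
    · have hxp : x = p := le_antisymm hx.2 (not_lt.mp h)
      subst hxp
      simp [hg1]
  have he2 : ∀ x ∈ Set.Icc p (1:ℝ), f x = g2 x := by
    intro x hx
    rw [hf, if_neg (not_lt.mpr hx.1)]
  refine ⟨?_, ?_, ?_⟩
  · intro x hx y hy hxy
    rw [he1 x ⟨hx.1, by linarith [hx.2]⟩, he1 y ⟨hy.1, by linarith [hy.2]⟩]
    exact m1 hx hy hxy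
  · intro x hx y hy hxy
    rcases le_or_gt y p with hyp | hyp
    · rw [he1 x ⟨by linarith [hx.1, hp0], by linarith⟩, he1 y ⟨by linarith [hy.1, hp0], hyp⟩]
      exact a1 ⟨hx.1, by linarith⟩ ⟨hy.1, hyp⟩ hxy
    · rcases le_or_gt p x with hxp | hxp
      · rw [he2 x ⟨hxp, by linarith [hx.2]⟩, he2 y ⟨le_of_lt hyp, by linarith [hy.2]⟩]
        exact a2 ⟨hxp, hx.2⟩ ⟨le_of_lt hyp, hy.2⟩ hxy
      · rw [he1 x ⟨by linarith [hx.1, hp0], le_of_lt hxp⟩, he2 y ⟨le_of_lt hyp, by linarith [hy.2]⟩]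
        have h1 : g1 p < g1 x := a1 ⟨hx.1, le_of_lt hxp⟩ ⟨by linarith, le_refl p⟩ hxp
        have h2 : g2 y < g2 p := a2 ⟨le_refl p, by linarith⟩ ⟨le_of_lt hyp, hy.2⟩ hyp
        have hpp : g1 p = g2 p := by simp [hg1, hg2]
        linarith [h1, h2, hpp.le]
  · intro x hx y hy hxy
    rw [he2 x ⟨by linarith [hx.1], hx.2⟩, he2 y ⟨by linarith [hy.1], hy.2⟩]
    exact m2 hx hy hxy
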